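/- arXiv:1602.00732 — 2 statements merged into one kernel-verified Lean document; each statement's English description precedes it below -/
import Mathlib

section
/- For m > 0, the Schwarzschild isoperimetric profile φ_m is strictly convex on the interval [36π m², ∞). -/
/-- Area of the coordinate sphere of radius `r` in the Schwarzschild manifold of
mass `m`, in isotropic coordinates: `A_m(r) = 4π r² (1 + m/(2r))⁴`. -/
noncomputable def schwA (m r : ℝ) : ℝ := 4 * Real.pi * r ^ 2 * (1 + m / (2 * r)) ^ 4

/-- Volume enclosed between the horizon `r = m/2` and the coordinate sphere of radius `r`
in the Schwarzschild manifold of mass `m`: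
`V_m(r) = ∫_{m/2}^r 4π ρ² (1 + m/(2ρ))⁶ dρ`. -/
noncomputable def schwV (m r : ℝ) : ℝ :=
  ∫ ρ in (m / 2)..r, 4 * Real.pi * ρ ^ 2 * (1 + m / (2 * ρ)) ^ 6

/-- The Schwarzschild isoperimetric profile of mass `m`: `φ_m = V_m ∘ A_m⁻¹`, where
`A_m⁻¹ : [16πm², ∞) → [m/2, ∞)` is the inverse of the (bijective, strictly increasing)
area function `A_m : [m/2, ∞) → [16πm², ∞)`. -/
noncomputable def schwPhi (m A : ℝ) : ℝ :=
  schwV m (Function.invFunOn (schwA m) (Set.Ici (m / 2)) A)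

/-- Explicit inverse of the area function. -/
noncomputable def rInv (m A : ℝ) : ℝ :=
  (Real.sqrt (A / Real.pi) - 2 * m +
    Real.sqrt (Real.sqrt (A / Real.pi) * (Real.sqrt (A / Real.pi) - 4 * m))) / 4

/-- The derivative of the isoperimetric profile, as a function of `r`. -/
noncomputable def schwF (m r : ℝ) : ℝ := (2 * r + m) ^ 3 / (8 * r * (2 * r - m))

lemma schwA_eq (m r : ℝ) (hr : r ≠ 0) :
    schwA m r = Real.pi * (2 * r + m) ^ 4 / (4 * r ^ 2) := by
  unfold schwA; field_simp; ring

lemma rInv_schwA (m r : ℝ) (hm : 0 < m) (hr : m / 2 ≤ r) : rInv m (schwA m r) = r := by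
  have hr0 : 0 < r := lt_of_lt_of_le (by positivity) hr
  have hπ := Real.pi_pos
  have h1 : schwA m r / Real.pi = ((2 * r + m) ^ 2 / (2 * r)) ^ 2 := by
    rw [schwA_eq m r hr0.ne']; field_simp; ring
  have hs : Real.sqrt (schwA m r / Real.pi) = (2 * r + m) ^ 2 / (2 * r) := by
    rw [h1, Real.sqrt_sq (by positivity)]
  have h2 : (2 * r + m) ^ 2 / (2 * r) - 4 * m = (2 * r - m) ^ 2 / (2 * r) := by
    field_simp; ring
  have h3 : Real.sqrt ((2 * r + m) ^ 2 / (2 * r) * ((2 * r - m) ^ 2 / (2 * r)))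
      = (2 * r + m) * (2 * r - m) / (2 * r) := by
    have he : (2 * r + m) ^ 2 / (2 * r) * ((2 * r - m) ^ 2 / (2 * r))
        = ((2 * r + m) * (2 * r - m) / (2 * r)) ^ 2 := by field_simp
    rw [he, Real.sqrt_sq]
    have h2rm : 0 ≤ 2 * r - m := by linarith
    positivity
  unfold rInv
  rw [hs, h2, h3]
  field_simp
  ring

lemma schwA_rInv (m A : ℝ) (hm : 0 < m) (hA : 16 * Real.pi * m ^ 2 ≤ A) :
    m / 2 ≤ rInv m A ∧ schwA m (rInv m A) = A := by
  have hπ := Real.pi_pos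
  have hA0 : 0 ≤ A := le_trans (by positivity) hA
  set s := Real.sqrt (A / Real.pi) with hsdef
  have hs0 : 0 ≤ s := Real.sqrt_nonneg _
  have hss : s ^ 2 = A / Real.pi := Real.sq_sqrt (by positivity)
  have hs4 : 4 * m ≤ s := by
    have h16 : (4 * m) ^ 2 ≤ A / Real.pi := by
      rw [le_div_iff₀ hπ]; nlinarith
    calc 4 * m = Real.sqrt ((4 * m) ^ 2) := (Real.sqrt_sq (by positivity)).symm
      _ ≤ s := Real.sqrt_le_sqrt h16
  set t := Real.sqrt (s * (s - 4 * m)) with htdef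
  have ht0 : 0 ≤ t := Real.sqrt_nonneg _
  have ht2 : t ^ 2 = s * (s - 4 * m) := Real.sq_sqrt (by nlinarith)
  have hrdef : rInv m A = (s - 2 * m + t) / 4 := rfl
  have hr2 : m / 2 ≤ rInv m A := by rw [hrdef]; linarith
  have hr0 : 0 < rInv m A := lt_of_lt_of_le (by positivity) hr2
  refine ⟨hr2, ?_⟩
  set r := rInv m A
  have hkey : (2 * r + m) ^ 2 = 2 * s * r := by
    rw [hrdef] at *
    nlinarith [ht2]
  rw [schwA_eq m r hr0.ne']
  have h4 : (2 * r + m) ^ 4 = (2 * s * r) ^ 2 := by rw [← hkey]; ring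
  rw [h4, div_eq_iff (by positivity : (4 : ℝ) * r ^ 2 ≠ 0)]
  have h5 : Real.pi * (2 * s * r) ^ 2 = Real.pi * s ^ 2 * (4 * r ^ 2) := by ring
  rw [h5, hss]
  field_simp

lemma invFunOn_eq_rInv (m A : ℝ) (hm : 0 < m) (hA : 16 * Real.pi * m ^ 2 ≤ A) :
    Function.invFunOn (schwA m) (Set.Ici (m / 2)) A = rInv m A := by
  obtain ⟨hr2, hAr⟩ := schwA_rInv m A hm hA
  have hex : ∃ x ∈ Set.Ici (m / 2), schwA m x = A := ⟨_, hr2, hAr⟩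
  have h1 : Function.invFunOn (schwA m) (Set.Ici (m / 2)) A ∈ Set.Ici (m / 2) :=
    Function.invFunOn_mem hex
  have h2 : schwA m (Function.invFunOn (schwA m) (Set.Ici (m / 2)) A) = A :=
    Function.invFunOn_eq hex
  calc Function.invFunOn (schwA m) (Set.Ici (m / 2)) A
      = rInv m (schwA m (Function.invFunOn (schwA m) (Set.Ici (m / 2)) A)) :=
        (rInv_schwA m _ hm h1).symm
    _ = rInv m A := by rw [h2]

lemma schwPhi_eq (m A : ℝ) (hm : 0 < m) (hA : 16 * Real.pi * m ^ 2 ≤ A) :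
    schwPhi m A = schwV m (rInv m A) := by
  unfold schwPhi
  rw [invFunOn_eq_rInv m A hm hA]

lemma continuous_rInv (m : ℝ) : Continuous (rInv m) := by
  unfold rInv; fun_prop

lemma hasDerivAt_schwA (m r : ℝ) (hr : r ≠ 0) :
    HasDerivAt (schwA m) (Real.pi * (2 * r + m) ^ 3 * (2 * r - m) / (2 * r ^ 3)) r := by
  have h2r : (2 : ℝ) * r ≠ 0 := by simpa using hr
  have h1 : HasDerivAt (fun x : ℝ => 1 + m / (2 * x)) (-(m * 2) / (2 * r) ^ 2) r := by
    have := ((hasDerivAt_const r m).div ((hasDerivAt_id r).const_mul 2) h2r).const_add 1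
    simpa using this
  have h2 := h1.fun_pow 4
  have h3 : HasDerivAt (fun x : ℝ => 4 * Real.pi * x ^ 2)
      (4 * Real.pi * (2 * r)) r := by
    simpa using ((hasDerivAt_pow 2 r).const_mul (4 * Real.pi))
  have h4 := h3.fun_mul h2
  have hfun : schwA m = fun x => 4 * Real.pi * x ^ 2 * (1 + m / (2 * x)) ^ 4 := rfl
  rw [hfun]
  refine h4.congr_deriv ?_
  push_cast
  field_simp
  ring

lemma hasDerivAt_schwV (m r : ℝ) (hm : 0 < m) (hr : 0 < r) :
    HasDerivAt (schwV m) (4 * Real.pi * r ^ 2 * (1 + m / (2 * r)) ^ 6) r := by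
  set g : ℝ → ℝ := fun ρ => 4 * Real.pi * ρ ^ 2 * (1 + m / (2 * ρ)) ^ 6 with hg
  have hgc : ∀ x : ℝ, x ≠ 0 → ContinuousAt g x := by
    intro x hx
    have h2x : (2 : ℝ) * x ≠ 0 := by simpa using hx
    exact (continuousAt_const.mul (continuousAt_id.pow 2)).mul
      ((continuousAt_const.add (continuousAt_const.div
        (continuousAt_const.mul continuousAt_id) h2x)).pow 6)
  have hgIoi : ContinuousOn g (Set.Ioi (0 : ℝ)) := fun x hx =>
    (hgc x (ne_of_gt hx)).continuousWithinAt
  have hsub : Set.uIcc (m / 2) r ⊆ Set.Ioi (0 : ℝ) := fun x hx =>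
    lt_of_lt_of_le (lt_min (by positivity) hr) hx.1
  have hint : IntervalIntegrable g MeasureTheory.volume (m / 2) r :=
    (hgIoi.mono hsub).intervalIntegrable
  have hmeas : StronglyMeasurableAtFilter g (nhds r) MeasureTheory.volume :=
    ContinuousOn.stronglyMeasurableAtFilter isOpen_Ioi hgIoi r hr
  exact intervalIntegral.integral_hasDerivAt_right hint hmeas (hgc r hr.ne')

lemma rInv_gt (m A : ℝ) (hm : 0 < m) (hA : 16 * Real.pi * m ^ 2 < A) :
    m / 2 < rInv m A := by
  obtain ⟨hr2, hAr⟩ := schwA_rInv m A hm hA.le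
  rcases lt_or_eq_of_le hr2 with h | h
  · exact h
  · exfalso
    have hA2 : schwA m (m / 2) = 16 * Real.pi * m ^ 2 := by
      unfold schwA
      have h1 : m / (2 * (m / 2)) = 1 := by field_simp
      rw [h1]; ring
    rw [← h, hA2] at hAr
    linarith

lemma hasDerivAt_schwPhi (m A : ℝ) (hm : 0 < m) (hA : 16 * Real.pi * m ^ 2 < A) :
    HasDerivAt (schwPhi m) (schwF m (rInv m A)) A := by
  have hπ := Real.pi_pos
  obtain ⟨hr2, hAr⟩ := schwA_rInv m A hm hA.le
  set r := rInv m A with hrdef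
  have hrm : m / 2 < r := rInv_gt m A hm hA
  have hr0 : 0 < r := lt_of_lt_of_le (by positivity) hr2
  have h2rm : 0 < 2 * r - m := by linarith
  set d := Real.pi * (2 * r + m) ^ 3 * (2 * r - m) / (2 * r ^ 3) with hddef
  have hd0 : 0 < d := by
    apply div_pos _ (by positivity)
    have : 0 < 2 * r + m := by linarith
    positivity
  have hdA : HasDerivAt (schwA m) d r := hasDerivAt_schwA m r hr0.ne'
  have hinv : HasDerivAt (rInv m) d⁻¹ A := by
    apply HasDerivAt.of_local_left_inverse ((continuous_rInv m).continuousAt) hdA hd0.ne'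
    filter_upwards [Ioi_mem_nhds hA] with y hy
    exact (schwA_rInv m y hm (le_of_lt hy)).2
  have hV : HasDerivAt (schwV m) (4 * Real.pi * r ^ 2 * (1 + m / (2 * r)) ^ 6) r :=
    hasDerivAt_schwV m r hm hr0
  have hcomp : HasDerivAt (fun y => schwV m (rInv m y))
      (4 * Real.pi * r ^ 2 * (1 + m / (2 * r)) ^ 6 * d⁻¹) A := by have := hV.comp A hinv; exact this
  have heq : schwPhi m =ᶠ[nhds A] fun y => schwV m (rInv m y) := by
    filter_upwards [Ioi_mem_nhds hA] with y hy
    exact schwPhi_eq m y hm (le_of_lt hy)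
  have hPhi : HasDerivAt (schwPhi m)
      (4 * Real.pi * r ^ 2 * (1 + m / (2 * r)) ^ 6 * d⁻¹) A :=
    hcomp.congr_of_eventuallyEq heq
  convert hPhi using 1
  unfold schwF
  rw [hddef]
  have h2rm' : (2 : ℝ) * r + m ≠ 0 := by positivity
  field_simp
  ring

lemma strictMonoOn_schwA (m : ℝ) (hm : 0 < m) :
    StrictMonoOn (schwA m) (Set.Ici (m / 2)) := by
  apply strictMonoOn_of_deriv_pos (convex_Ici _)
  · intro x hx
    have hx0 : 0 < x := lt_of_lt_of_le (by positivity) hx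
    exact (hasDerivAt_schwA m x hx0.ne').continuousAt.continuousWithinAt
  · intro x hx
    rw [interior_Ici] at hx
    have hx0 : 0 < x := lt_trans (by positivity) hx
    rw [(hasDerivAt_schwA m x hx0.ne').deriv]
    apply div_pos _ (by positivity)
    have h1 : 0 < 2 * x + m := by linarith
    have h2 : 0 < 2 * x - m := by
      have : m / 2 < x := hx
      linarith
    positivity

lemma hasDerivAt_schwF (m r : ℝ) (hr : r ≠ 0) (hrm : 8 * r * (2 * r - m) ≠ 0) :
    HasDerivAt (schwF m)
      ((3 * (2 * r + m) ^ 2 * 2 * (8 * r * (2 * r - m)) -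
        (2 * r + m) ^ 3 * (8 * (2 * r - m) + 8 * r * 2)) / (8 * r * (2 * r - m)) ^ 2) r := by
  have hnum : HasDerivAt (fun x : ℝ => (2 * x + m) ^ 3) (3 * (2 * r + m) ^ 2 * 2) r := by
    have h := (((hasDerivAt_id r).const_mul 2).add_const m).fun_pow 3
    simpa using h
  have hden : HasDerivAt (fun x : ℝ => 8 * x * (2 * x - m))
      (8 * (2 * r - m) + 8 * r * 2) r := by
    have h1 : HasDerivAt (fun x : ℝ => 8 * x) 8 r := by
      simpa using (hasDerivAt_id r).const_mul 8
    have h2 : HasDerivAt (fun x : ℝ => 2 * x - m) 2 r := by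
      simpa using ((hasDerivAt_id r).const_mul 2).sub_const m
    simpa using h1.fun_mul h2
  have h := hnum.div hden hrm
  exact h

/-- For `m > 0`, `φ_m` is strictly convex on `[36πm², ∞)`. -/
theorem schwPhi_strictConvexOn (m : ℝ) (hm : 0 < m) :
    StrictConvexOn ℝ (Set.Ici (36 * Real.pi * m ^ 2)) (schwPhi m) := by
  have hπ := Real.pi_pos
  have h36 : ∀ A : ℝ, 36 * Real.pi * m ^ 2 ≤ A → 16 * Real.pi * m ^ 2 < A := by
    intro A hA; nlinarith [mul_pos hπ (pow_pos hm 2)]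
  -- key quadratic positivity at points with schwA m r > 36πm²
  have hq : ∀ r : ℝ, m / 2 < r → 36 * Real.pi * m ^ 2 < schwA m r →
      0 < 4 * r ^ 2 - 8 * m * r + m ^ 2 := by
    intro r hr hAr
    have hr0 : 0 < r := lt_of_lt_of_le (by positivity) hr.le
    rw [schwA_eq m r hr0.ne'] at hAr
    have h1 : 36 * Real.pi * m ^ 2 * (4 * r ^ 2) < Real.pi * (2 * r + m) ^ 4 :=
      (lt_div_iff₀ (by positivity : (0:ℝ) < 4 * r ^ 2)).mp hAr
    have h144 : 144 * m ^ 2 * r ^ 2 < (2 * r + m) ^ 4 := by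
      have := (mul_lt_mul_iff_right₀ hπ).mp
        (by linarith : Real.pi * (144 * m ^ 2 * r ^ 2) < Real.pi * (2 * r + m) ^ 4)
      linarith
    by_contra h
    push_neg at h
    have hXY : (2 * r + m) ^ 2 ≤ 12 * m * r := by nlinarith
    nlinarith [sq_nonneg (2 * r + m), mul_pos hm hr0]
  -- r > m whenever the quadratic is positive and r > m/2
  have hrm : ∀ r : ℝ, m / 2 < r → 0 < 4 * r ^ 2 - 8 * m * r + m ^ 2 → m < r := by
    intro r hr hqr
    by_contra h
    push_neg at h
    nlinarith [mul_nonneg (sub_nonneg.2 h) (by linarith : (0:ℝ) ≤ 2 * r - m)]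
  apply StrictMonoOn.strictConvexOn_of_deriv (convex_Ici _)
  · -- continuity
    intro A hA
    exact (hasDerivAt_schwPhi m A hm (h36 A hA)).continuousAt.continuousWithinAt
  · -- strict monotonicity of the derivative on the interior
    rw [interior_Ici]
    intro A hA B hB hAB
    rw [Set.mem_Ioi] at hA hB
    have hA16 := h36 A hA.le
    have hB16 := h36 B hB.le
    rw [(hasDerivAt_schwPhi m A hm hA16).deriv, (hasDerivAt_schwPhi m B hm hB16).deriv]
    obtain ⟨hrA2, hArA⟩ := schwA_rInv m A hm hA16.le
    obtain ⟨hrB2, hArB⟩ := schwA_rInv m B hm hB16.le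
    set rA := rInv m A with hrAdef
    set rB := rInv m B with hrBdef
    have hrAm : m / 2 < rA := rInv_gt m A hm hA16
    have hrBm : m / 2 < rB := rInv_gt m B hm hB16
    have hrA0 : 0 < rA := lt_of_lt_of_le (by positivity) hrAm.le
    have hqA : 0 < 4 * rA ^ 2 - 8 * m * rA + m ^ 2 := hq rA hrAm (by rw [hArA]; exact hA)
    have hmA : m < rA := hrm rA hrAm hqA
    -- rA < rB
    have hrAB : rA < rB := by
      by_contra h
      push_neg at h
      have := (strictMonoOn_schwA m hm).monotoneOn hrB2 hrA2 h
      rw [hArA, hArB] at this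
      linarith
    -- strict monotonicity of F on [rA, rB]
    have hF : StrictMonoOn (schwF m) (Set.Icc rA rB) := by
      apply strictMonoOn_of_deriv_pos (convex_Icc _ _)
      · intro x hx
        have hx0 : 0 < x := lt_of_lt_of_le hrA0 hx.1
        have hxm : 0 < 2 * x - m := by
          have : m / 2 < x := lt_of_lt_of_le hrAm hx.1
          linarith
        have hden : 8 * x * (2 * x - m) ≠ 0 := by positivity
        exact (hasDerivAt_schwF m x hx0.ne' hden).continuousAt.continuousWithinAt
      · intro x hx
        rw [interior_Icc] at hx
        have hxA : rA < x := hx.1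
        have hx0 : 0 < x := lt_trans hrA0 hxA
        have hxm : 0 < 2 * x - m := by
          have : m / 2 < x := lt_trans hrAm hxA
          linarith
        have hden : 8 * x * (2 * x - m) ≠ 0 := by positivity
        rw [(hasDerivAt_schwF m x hx0.ne' hden).deriv]
        apply div_pos _ (by positivity)
        have hqx : 0 < 4 * x ^ 2 - 8 * m * x + m ^ 2 := by
          nlinarith [mul_nonneg (le_of_lt (sub_pos.2 hxA))
            (by linarith : (0:ℝ) ≤ 4 * (x + rA) - 8 * m)]
        have heq : 3 * (2 * x + m) ^ 2 * 2 * (8 * x * (2 * x - m)) -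
            (2 * x + m) ^ 3 * (8 * (2 * x - m) + 8 * x * 2)
            = 8 * (2 * x + m) ^ 2 * (4 * x ^ 2 - 8 * m * x + m ^ 2) := by ring
        rw [heq]
        have h2xm : 0 < 2 * x + m := by linarith
        positivity
    exact hF ⟨le_refl rA, hrAB.le⟩ ⟨hrAB.le, le_refl rB⟩ hrAB
end

section
/- For m > 0, the function A ↦ φ_m(A) − (2/3) A φ_m′(A) is strictly increasing on the interval (16π m², ∞). -/
open Real Set Function


noncomputable def schwPsi (m r : ℝ) : ℝ := (2*r+m)^3/(8*r*(2*r-m))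

noncomputable def schwH (m r : ℝ) : ℝ := schwV m r - 2/3 * schwA m r * schwPsi m r

lemma schwA_hasDerivAt (m : ℝ) {r : ℝ} (hr : 0 < r) :
    HasDerivAt (schwA m) (8*Real.pi*(1+m/(2*r))^3*(r - m/2)) r := by
  have h0 : (2*r) ≠ 0 := by positivity
  have h1 : HasDerivAt (fun x : ℝ => 1 + m/(2*x)) ((0*(2*r) - m*2)/(2*r)^2) r := by
    have := ((hasDerivAt_const r m).div ((hasDerivAt_id r).const_mul 2) h0).const_add 1
    simpa using this
  have h2 := h1.fun_pow 4
  have h3 : HasDerivAt (fun x : ℝ => 4*Real.pi*x^2) (4*Real.pi*(2*r^1)) r :=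
    (hasDerivAt_pow 2 r).const_mul (4*Real.pi)
  have := h3.fun_mul h2
  refine this.congr_deriv ?_
  have hpi := Real.pi_pos
  have hrne : r ≠ 0 := hr.ne'
  norm_num only
  field_simp
  ring

lemma one_add_pos (m : ℝ) (hm : 0 < m) {r : ℝ} (hr : 0 < r) : 0 < 1 + m/(2*r) := by
  positivity

lemma schwA_continuousOn (m : ℝ) (hm : 0 < m) : ContinuousOn (schwA m) (Ici (m/2)) := by
  intro r hr
  have hr0 : 0 < r := lt_of_lt_of_le (by linarith) hr
  exact ((schwA_hasDerivAt m hr0).differentiableAt.continuousAt).continuousWithinAt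

lemma schwA_strictMonoOn (m : ℝ) (hm : 0 < m) : StrictMonoOn (schwA m) (Ici (m/2)) := by
  apply strictMonoOn_of_deriv_pos (convex_Ici _) (schwA_continuousOn m hm)
  intro r hr
  rw [interior_Ici] at hr
  have hr0 : 0 < r := lt_trans (by linarith) hr
  rw [(schwA_hasDerivAt m hr0).deriv]
  have h1 : 0 < 1 + m/(2*r) := one_add_pos m hm hr0
  have h2 : 0 < r - m/2 := by simpa [sub_pos] using hr
  positivity

lemma schwA_at_half (m : ℝ) (hm : 0 < m) : schwA m (m/2) = 16 * Real.pi * m ^ 2 := by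
  have hm0 : m ≠ 0 := ne_of_gt hm
  unfold schwA
  field_simp
  ring

lemma schwA_exists (m : ℝ) (hm : 0 < m) {A : ℝ} (hA : 16 * Real.pi * m ^ 2 ≤ A) :
    ∃ r ∈ Ici (m/2), schwA m r = A := by
  set b : ℝ := max (m/2) (Real.sqrt (A/(4*Real.pi))) with hb
  have hcb : m/2 ≤ b := le_max_left _ _
  have hApos : 0 < A := lt_of_lt_of_le (by positivity) hA
  have hAb : A ≤ schwA m b := by
    have hb0 : 0 < b := lt_of_lt_of_le (by linarith) hcb
    have h1 : A ≤ 4*Real.pi*b^2 := by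
      have hs : Real.sqrt (A/(4*Real.pi)) ≤ b := le_max_right _ _
      have h2 : A/(4*Real.pi) = (Real.sqrt (A/(4*Real.pi)))^2 := by
        rw [Real.sq_sqrt (by positivity)]
      have h3 : A/(4*Real.pi) ≤ b^2 := by
        rw [h2]; exact pow_le_pow_left₀ (Real.sqrt_nonneg _) hs 2
      calc A = 4*Real.pi * (A/(4*Real.pi)) := by field_simp
        _ ≤ 4*Real.pi*b^2 := by
            have : (0:ℝ) < 4*Real.pi := by positivity
            nlinarith [Real.pi_pos]
    have h4 : 1 ≤ (1 + m/(2*b))^4 := by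
      have : (1:ℝ) ≤ 1 + m/(2*b) := by
        have : 0 < m/(2*b) := by positivity
        linarith
      exact one_le_pow₀ this
    calc A ≤ 4*Real.pi*b^2 := h1
      _ = 4*Real.pi*b^2 * 1 := by ring
      _ ≤ 4*Real.pi*b^2 * (1 + m/(2*b))^4 := by
          apply mul_le_mul_of_nonneg_left h4 (by positivity)
      _ = schwA m b := rfl
  have hmem : A ∈ Icc (schwA m (m/2)) (schwA m b) := by
    constructor
    · rw [schwA_at_half m hm]; exact hA
    · exact hAb
  have := intermediate_value_Icc hcb ((schwA_continuousOn m hm).mono (Icc_subset_Ici_self))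
  obtain ⟨r, hr, hrA⟩ := this hmem
  exact ⟨r, hr.1, hrA⟩

lemma schwInv_mem (m : ℝ) (hm : 0 < m) {A : ℝ} (hA : 16 * Real.pi * m ^ 2 ≤ A) :
    invFunOn (schwA m) (Ici (m/2)) A ∈ Ici (m/2) :=
  Function.invFunOn_mem (schwA_exists m hm hA)

lemma schwInv_eq (m : ℝ) (hm : 0 < m) {A : ℝ} (hA : 16 * Real.pi * m ^ 2 ≤ A) :
    schwA m (invFunOn (schwA m) (Ici (m/2)) A) = A :=
  Function.invFunOn_eq (schwA_exists m hm hA)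

lemma schwInv_gt (m : ℝ) (hm : 0 < m) {A : ℝ} (hA : 16 * Real.pi * m ^ 2 < A) :
    m/2 < invFunOn (schwA m) (Ici (m/2)) A := by
  rcases eq_or_lt_of_le (show m/2 ≤ _ from schwInv_mem m hm hA.le) with h | h
  · exfalso
    have := schwInv_eq m hm hA.le
    rw [← h, schwA_at_half m hm] at this
    linarith
  · exact h

lemma schwInv_continuousAt (m : ℝ) (hm : 0 < m) {A : ℝ} (hA : 16 * Real.pi * m ^ 2 < A) :
    ContinuousAt (invFunOn (schwA m) (Ici (m/2))) A := by
  set g := invFunOn (schwA m) (Ici (m/2)) with hg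
  set r := g A with hrdef
  have hrA : schwA m r = A := schwInv_eq m hm hA.le
  have hr : m/2 < r := schwInv_gt m hm hA
  rw [ContinuousAt]
  apply tendsto_order.2
  constructor
  · intro b hb
    by_cases hbc : b < m/2
    · filter_upwards [Ioi_mem_nhds hA] with B hB
      exact hbc.trans_le (schwInv_mem m hm (le_of_lt hB))
    · push_neg at hbc
      have hfb : schwA m b < A := by
        rw [← hrA]
        exact schwA_strictMonoOn m hm hbc (le_of_lt hr) hb
      filter_upwards [Ioi_mem_nhds hfb, Ioi_mem_nhds hA] with B hB1 hB2
      by_contra hle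
      push_neg at hle
      have hBA : schwA m (g B) = B := schwInv_eq m hm (le_of_lt hB2)
      have : schwA m (g B) ≤ schwA m b :=
        (schwA_strictMonoOn m hm).monotoneOn (schwInv_mem m hm (le_of_lt hB2)) hbc hle
      rw [hBA] at this
      exact absurd hB1 (not_lt.2 this)
  · intro b hb
    have hbc : m/2 ≤ b := le_of_lt (hr.trans hb)
    have hfb : A < schwA m b := by
      rw [← hrA]
      exact schwA_strictMonoOn m hm (le_of_lt hr) hbc hb
    filter_upwards [Iio_mem_nhds hfb, Ioi_mem_nhds hA] with B hB1 hB2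
    by_contra hle
    push_neg at hle
    have hBA : schwA m (g B) = B := schwInv_eq m hm (le_of_lt hB2)
    have : schwA m b ≤ schwA m (g B) :=
      (schwA_strictMonoOn m hm).monotoneOn hbc (schwInv_mem m hm (le_of_lt hB2)) hle
    rw [hBA] at this
    exact absurd hB1 (not_lt.2 this)

lemma schwIntegrand_continuousOn (m : ℝ) :
    ContinuousOn (fun ρ : ℝ => 4*Real.pi*ρ^2*(1+m/(2*ρ))^6) (Ioi 0) := by
  intro ρ hρ
  have h0 : (2*ρ) ≠ 0 := by have : (0:ℝ) < ρ := hρ; positivity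
  have h2 : ContinuousAt (fun ρ : ℝ => m/(2*ρ)) ρ :=
    continuousAt_const.div (continuousAt_const.mul continuousAt_id) h0
  exact (ContinuousAt.mul (continuousAt_const.mul ((continuous_pow 2).continuousAt))
    ((continuousAt_const.add h2).pow 6)).continuousWithinAt

lemma schwV_hasDerivAt (m : ℝ) (hm : 0 < m) {r : ℝ} (hr : m/2 < r) :
    HasDerivAt (schwV m) (4*Real.pi*r^2*(1+m/(2*r))^6) r := by
  have hsub : Set.uIcc (m/2) r ⊆ Ioi 0 := by
    rw [Set.uIcc_of_le hr.le]
    intro x hx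
    exact lt_of_lt_of_le (by linarith) hx.1
  have hII : IntervalIntegrable (fun ρ : ℝ => 4*Real.pi*ρ^2*(1+m/(2*ρ))^6)
      MeasureTheory.volume (m/2) r :=
    ((schwIntegrand_continuousOn m).mono hsub).intervalIntegrable
  have hmeas := (schwIntegrand_continuousOn m).stronglyMeasurableAtFilter isOpen_Ioi
    (μ := MeasureTheory.volume) r (by exact lt_of_lt_of_le (by linarith) hr.le)
  have hcont : ContinuousAt (fun ρ : ℝ => 4*Real.pi*ρ^2*(1+m/(2*ρ))^6) r :=
    (schwIntegrand_continuousOn m).continuousAt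
      (Ioi_mem_nhds (lt_of_lt_of_le (by linarith) hr.le))
  exact intervalIntegral.integral_hasDerivAt_right hII hmeas hcont

lemma schwPhi_hasDerivAt (m : ℝ) (hm : 0 < m) {A : ℝ} (hA : 16 * Real.pi * m ^ 2 < A) :
    HasDerivAt (schwPhi m) (schwPsi m (invFunOn (schwA m) (Ici (m/2)) A)) A := by
  set r := invFunOn (schwA m) (Ici (m/2)) A with hrdef
  have hr : m/2 < r := schwInv_gt m hm hA
  have hr0 : 0 < r := lt_trans (by linarith) hr
  have hu : 0 < 1 + m/(2*r) := one_add_pos m hm hr0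
  have hf' : (8*Real.pi*(1+m/(2*r))^3*(r - m/2)) ≠ 0 := by
    have : 0 < r - m/2 := by linarith
    positivity
  have hinv : HasDerivAt (invFunOn (schwA m) (Ici (m/2)))
      (8*Real.pi*(1+m/(2*r))^3*(r - m/2))⁻¹ A := by
    apply HasDerivAt.of_local_left_inverse (schwInv_continuousAt m hm hA)
      (schwA_hasDerivAt m hr0) hf'
    filter_upwards [Ioi_mem_nhds hA] with B hB
    exact schwInv_eq m hm (le_of_lt hB)
  have hV := schwV_hasDerivAt m hm hr
  have hcomp := HasDerivAt.comp A hV hinv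
  have heq : (4*Real.pi*r^2*(1+m/(2*r))^6) * (8*Real.pi*(1+m/(2*r))^3*(r - m/2))⁻¹
      = schwPsi m r := by
    unfold schwPsi
    rw [mul_inv_eq_iff_eq_mul₀ hf']
    have hpi : Real.pi ≠ 0 := Real.pi_ne_zero
    have hrne : r ≠ 0 := ne_of_gt hr0
    have hrm : 2*r - m ≠ 0 := ne_of_gt (by linarith)
    have hrm2 : r*2 - m ≠ 0 := ne_of_gt (by linarith)
    field_simp
    ring
  rw [heq] at hcomp
  exact hcomp

lemma schwH_hasDerivAt (m : ℝ) (hm : 0 < m) {r : ℝ} (hr : m/2 < r) :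
    HasDerivAt (schwH m) (Real.pi*m*(2*r+m)^6/(12*r^3*(2*r-m)^2)) r := by
  have hr0 : 0 < r := by linarith
  have hrm : (0:ℝ) < 2*r - m := by linarith
  have hden : 8*r*(2*r-m) ≠ 0 := by positivity
  have hnum : HasDerivAt (fun x : ℝ => (2*x+m)^3) (3*(2*r+m)^2*2) r := by
    have h : HasDerivAt (fun x : ℝ => 2*x+m) 2 r := by
      simpa using ((hasDerivAt_id r).const_mul 2).add_const m
    simpa using h.fun_pow 3
  have hd : HasDerivAt (fun x : ℝ => 8*x*(2*x-m)) (8*(2*r-m) + 8*r*2) r := by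
    have h1 : HasDerivAt (fun x : ℝ => 8*x) 8 r := by simpa using (hasDerivAt_id r).const_mul 8
    have h2 : HasDerivAt (fun x : ℝ => 2*x - m) 2 r := by
      simpa using ((hasDerivAt_id r).const_mul 2).sub_const m
    simpa using h1.fun_mul h2
  have hpsi : HasDerivAt (schwPsi m)
      ((3*(2*r+m)^2*2 * (8*r*(2*r-m)) - (2*r+m)^3 * (8*(2*r-m) + 8*r*2)) / (8*r*(2*r-m))^2) r :=
    hnum.div hd hden
  have hA := schwA_hasDerivAt m hr0
  have hV := schwV_hasDerivAt m hm hr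
  have h := hV.sub ((hA.const_mul (2/3 : ℝ)).fun_mul hpsi)
  refine h.congr_deriv ?_
  have hpi : Real.pi ≠ 0 := Real.pi_ne_zero
  have hrne : r ≠ 0 := ne_of_gt hr0
  have hrm' : 2*r - m ≠ 0 := ne_of_gt hrm
  have hrm2 : r*2 - m ≠ 0 := ne_of_gt (by linarith)
  unfold schwA schwPsi
  field_simp
  ring

lemma schwH_strictMonoOn (m : ℝ) (hm : 0 < m) : StrictMonoOn (schwH m) (Ioi (m/2)) := by
  apply strictMonoOn_of_deriv_pos (convex_Ioi _)
  · intro r hr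
    exact (schwH_hasDerivAt m hm hr).differentiableAt.continuousAt.continuousWithinAt
  · intro r hr
    rw [interior_Ioi] at hr
    rw [(schwH_hasDerivAt m hm hr).deriv]
    have hr0 : 0 < r := lt_trans (by linarith) hr
    have hrm : (0:ℝ) < 2*r - m := by
      have : m/2 < r := hr
      linarith
    have hrp : (0:ℝ) < 2*r + m := by linarith
    have := Real.pi_pos
    positivity


/-- For `m > 0`, `A ↦ φ_m(A) − (2/3) A φ_m′(A)` is strictly increasing on
`(16πm², ∞)`. -/
theorem schwPhi_aux_strictMono (m : ℝ) (hm : 0 < m) :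
    StrictMonoOn (fun A : ℝ => schwPhi m A - 2 / 3 * A * deriv (schwPhi m) A)
      (Set.Ioi (16 * Real.pi * m ^ 2)) := by
  have key : ∀ {A : ℝ}, 16 * Real.pi * m ^ 2 < A →
      schwPhi m A - 2 / 3 * A * deriv (schwPhi m) A
        = schwH m (invFunOn (schwA m) (Ici (m/2)) A) := by
    intro A hA
    rw [(schwPhi_hasDerivAt m hm hA).deriv]
    unfold schwH schwPhi
    rw [schwInv_eq m hm hA.le]
  intro A₁ hA₁ A₂ hA₂ h12
  have hA₁' : 16 * Real.pi * m ^ 2 < A₁ := hA₁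
  have hA₂' : 16 * Real.pi * m ^ 2 < A₂ := hA₂
  simp only
  rw [key hA₁', key hA₂']
  apply schwH_strictMonoOn m hm (schwInv_gt m hm hA₁') (schwInv_gt m hm hA₂')
  by_contra h
  push_neg at h
  have hmono := (schwA_strictMonoOn m hm).monotoneOn
    (schwInv_mem m hm hA₂'.le) (schwInv_mem m hm hA₁'.le) h
  rw [schwInv_eq m hm hA₁'.le, schwInv_eq m hm hA₂'.le] at hmono
  linarith
end
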